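/- Let X be a finitely supported subset of an invariant set with X not FSM uniformly infinite (no infinite uniformly supported subset). Then every finitely supported inclusion-order-preserving function f : ℘_us(X) → ℘_us(X) has a least fixed point, which is supported by supp(f) ∪ supp(X). -/

import Mathlib

open Pointwise

/-- The group of finitary permutations of the set `A` of atoms:
bijections of `A` that move only finitely many atoms. -/
def finPerm (A : Type*) : Subgroup (Equiv.Perm A) where
  carrier := {π | {a | π a ≠ a}.Finite}
  one_mem' := by simp
  mul_mem' := by
    intro π σ hπ hσ
    apply Set.Finite.subset (hπ.union hσ)
    intro a ha
    by_contra hc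
    simp only [Set.mem_union, Set.mem_setOf_eq, not_or, not_not] at hc
    exact ha (by simp [Equiv.Perm.mul_apply, hc.1, hc.2])
  inv_mem' := by
    intro π hπ
    apply Set.Finite.subset hπ
    intro a ha
    simp only [Set.mem_setOf_eq] at ha ⊢
    intro h
    exact ha (Equiv.Perm.inv_eq_iff_eq.mpr h.symm)

/-- `x` is finitely supported: some finite set of atoms supports it. -/
def FinitelySupported (A : Type*) {X : Type*} [MulAction (finPerm A) X] (x : X) : Prop :=
  ∃ S : Set A, S.Finite ∧ MulAction.Supports (finPerm A) S x

/-- A subset `Z` of an `S_A`-set is uniformly supported if a single finite set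
of atoms supports every element of `Z`. -/
def UniformlySupported (A : Type*) {X : Type*} [MulAction (finPerm A) X] (Z : Set X) : Prop :=
  ∃ S : Set A, S.Finite ∧ ∀ x ∈ Z, MulAction.Supports (finPerm A) S x

/-- The least support of `x`: the intersection of all finite sets of atoms supporting `x`. -/
noncomputable def supp (A : Type*) {X : Type*} [MulAction (finPerm A) X] (x : X) : Set A :=
  ⋂₀ {S : Set A | S.Finite ∧ MulAction.Supports (finPerm A) S x}

/-- `Z` contains no infinite uniformly supported subset
(`Z` is "FSM non-uniformly infinite"). -/
def NoInfUS (A : Type*) {X : Type*} [MulAction (finPerm A) X] (Z : Set X) : Prop :=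
  ∀ W ⊆ Z, UniformlySupported A W → W.Finite

/-- The uniform powerset `℘_us(X)`: all uniformly supported subsets of `X`. -/
def usPowerset (A : Type*) {X : Type*} [MulAction (finPerm A) X] (Z : Set X) : Set (Set X) :=
  {W | W ⊆ Z ∧ UniformlySupported A W}

/-- The finite powerset `℘_fin(X)`: all finite subsets of `X`. -/
def finPowerset {X : Type*} (Z : Set X) : Set (Set X) :=
  {W | W ⊆ Z ∧ W.Finite}

/-- `S` supports the function `f` on the domain `X` (Proposition 2.18'(2)):
for every `π` fixing `S` pointwise and every `x ∈ X`, `π • x ∈ X` and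
`f (π • x) = π • f x`. -/
def FnSupportsOn (A : Type*) {Y : Type*} [MulAction (finPerm A) Y]
    (X : Set Y) (S : Set A) (f : Y → Y) : Prop :=
  ∀ π : finPerm A, (∀ a ∈ S, π • a = a) → ∀ x ∈ X, π • x ∈ X ∧ f (π • x) = π • f x

/-- The least support of a function `f` with domain `X`. -/
noncomputable def fnSupp (A : Type*) {Y : Type*} [MulAction (finPerm A) Y]
    (X : Set Y) (f : Y → Y) : Set A :=
  ⋂₀ {S : Set A | S.Finite ∧ FnSupportsOn A X S f}


section Aux
variable {A : Type*} [DecidableEq A]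

/-- swap as an element of `finPerm A`. -/
def fswap (a b : A) : finPerm A :=
  ⟨Equiv.swap a b, Set.Finite.subset (Set.finite_singleton a |>.insert b) (by
    intro x hx
    simp only [Set.mem_setOf_eq] at hx
    by_contra hne
    simp only [Set.mem_insert_iff, Set.mem_singleton_iff, not_or] at hne
    exact hx (Equiv.swap_apply_of_ne_of_ne hne.2 hne.1))⟩

@[simp] lemma fswap_coe (a b : A) : ((fswap a b : finPerm A) : Equiv.Perm A) = Equiv.swap a b :=
  rfl

lemma fswap_smul (a b c : A) : (fswap a b) • c = Equiv.swap a b c := rfl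

lemma fswap_mul_self (a b : A) : fswap a b * fswap a b = 1 := by
  apply Subtype.ext
  simp [fswap, Equiv.swap_mul_self]

lemma eq_one_of_moved_empty (π : finPerm A) (h : {a | (π : Equiv.Perm A) a ≠ a} = ∅) :
    π = 1 := by
  apply Subtype.ext; apply Equiv.ext; intro a
  by_contra hc
  have ha : a ∈ {a | (π : Equiv.Perm A) a ≠ a} := hc
  rw [h] at ha
  exact Set.notMem_empty a ha

/-- generation of permutations fixing `S` by swaps avoiding `S`. -/
lemma fix_gen {S : Set A} {C : finPerm A → Prop} (h1 : C 1)
    (hmul : ∀ π σ : finPerm A, C π → C σ → C (π * σ))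
    (hswap : ∀ a b : A, a ∉ S → b ∉ S → C (fswap a b)) :
    ∀ π : finPerm A, (∀ a ∈ S, π • a = a) → C π := by
  suffices h : ∀ n (π : finPerm A), {a | (π : Equiv.Perm A) a ≠ a}.ncard ≤ n →
      (∀ a ∈ S, π • a = a) → C π by
    intro π hfix
    exact h _ π le_rfl hfix
  intro n
  induction n with
  | zero =>
    intro π hcard _
    have hfin : {a | (π : Equiv.Perm A) a ≠ a}.Finite := π.2
    have hemp : {a | (π : Equiv.Perm A) a ≠ a} = ∅ := by
      rw [← Set.ncard_eq_zero hfin]; omega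
    rw [eq_one_of_moved_empty π hemp]; exact h1
  | succ n ih =>
    intro π hcard hfix
    by_cases hmoved : {a | (π : Equiv.Perm A) a ≠ a} = ∅
    · rw [eq_one_of_moved_empty π hmoved]; exact h1
    · obtain ⟨a, ha⟩ := Set.nonempty_iff_ne_empty.mpr hmoved
      have ha' : (π : Equiv.Perm A) a ≠ a := ha
      have haS : a ∉ S := fun h => ha' (hfix a h)
      have hbS : (π : Equiv.Perm A) a ∉ S := by
        intro h
        have := hfix _ h
        exact ha' ((π : Equiv.Perm A).injective this)
      have hab : a ≠ (π : Equiv.Perm A) a := fun h => ha' h.symm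
      set b := (π : Equiv.Perm A) a with hb
      set π' := fswap a b * π with hπ'
      have hdecomp : π = fswap a b * π' := by
        rw [hπ', ← mul_assoc, fswap_mul_self, one_mul]
      have hsub : {c | (π' : Equiv.Perm A) c ≠ c} ⊆ {c | (π : Equiv.Perm A) c ≠ c} \ {a} := by
        intro c hc
        replace hc : Equiv.swap a b ((π : Equiv.Perm A) c) ≠ c := hc
        constructor
        · show (π : Equiv.Perm A) c ≠ c
          intro hcc
          rw [hcc] at hc
          rcases eq_or_ne c a with rfl | hca
          · exact ha' hcc
          rcases eq_or_ne c b with rfl | hcb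
          · have heq : (π : Equiv.Perm A) b = (π : Equiv.Perm A) a := by rw [hcc]
            exact hab ((π : Equiv.Perm A).injective heq).symm
          · exact hc (Equiv.swap_apply_of_ne_of_ne hca hcb)
        · intro hca
          simp only [Set.mem_singleton_iff] at hca
          rw [hca, ← hb, Equiv.swap_apply_right] at hc
          exact hc rfl
      have hcard' : {c | (π' : Equiv.Perm A) c ≠ c}.ncard ≤ n := by
        have h1' : {c | (π' : Equiv.Perm A) c ≠ c}.ncard ≤
            ({c | (π : Equiv.Perm A) c ≠ c} \ {a}).ncard :=
          Set.ncard_le_ncard hsub π.2.diff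
        have h2' : ({c | (π : Equiv.Perm A) c ≠ c} \ {a}).ncard
            = {c | (π : Equiv.Perm A) c ≠ c}.ncard - 1 :=
          Set.ncard_diff_singleton_of_mem ha
        have h3' : 0 < {c | (π : Equiv.Perm A) c ≠ c}.ncard :=
          (Set.ncard_pos π.2).mpr ⟨a, ha⟩
        omega
      have hfix' : ∀ c ∈ S, π' • c = c := by
        intro c hc
        have hca : c ≠ a := fun h => haS (h ▸ hc)
        have hcb : c ≠ b := fun h => hbS (h ▸ hc)
        have hval : (π : Equiv.Perm A) c = c := hfix c hc
        show Equiv.swap a b ((π : Equiv.Perm A) c) = c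
        rw [hval]
        exact Equiv.swap_apply_of_ne_of_ne hca hcb
      rw [hdecomp]
      exact hmul _ _ (hswap a b haS hbS) (ih π' hcard' hfix')
end Aux

section Aux2
variable {A : Type*} [DecidableEq A] [Infinite A]

lemma fswap_decomp (a b c : A) (hbc : b ≠ c) (hba : b ≠ a) :
    fswap c a * fswap b c * fswap c a = fswap a b := by
  apply Subtype.ext
  show Equiv.swap c a * Equiv.swap b c * Equiv.swap c a = Equiv.swap a b
  exact Equiv.swap_mul_swap_mul_swap hbc hba

lemma fix_inter {C : finPerm A → Prop} (h1 : C 1)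
    (hmul : ∀ π σ : finPerm A, C π → C σ → C (π * σ))
    {S₁ S₂ : Set A} (hf1 : S₁.Finite) (hf2 : S₂.Finite)
    (hS1 : ∀ π : finPerm A, (∀ a ∈ S₁, π • a = a) → C π)
    (hS2 : ∀ π : finPerm A, (∀ a ∈ S₂, π • a = a) → C π) :
    ∀ π : finPerm A, (∀ a ∈ S₁ ∩ S₂, π • a = a) → C π := by
  apply fix_gen h1 hmul
  intro a b haI hbI
  have key : ∀ (T : Set A), (∀ π : finPerm A, (∀ c ∈ T, π • c = c) → C π) →
      ∀ x y : A, x ∉ T → y ∉ T → C (fswap x y) := by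
    intro T hT x y hxT hyT
    apply hT
    intro c hc
    show Equiv.swap x y c = c
    exact Equiv.swap_apply_of_ne_of_ne (fun h => hxT (h ▸ hc)) (fun h => hyT (h ▸ hc))
  have pick : ∃ c : A, c ∉ S₁ ∧ c ∉ S₂ ∧ c ≠ a ∧ c ≠ b := by
    have hfin : (S₁ ∪ S₂ ∪ {a, b}).Finite :=
      (hf1.union hf2).union ((Set.finite_singleton b).insert a)
    obtain ⟨c, hc⟩ := hfin.infinite_compl.nonempty
    simp only [Set.mem_compl_iff, Set.mem_union, Set.mem_insert_iff,
      Set.mem_singleton_iff, not_or] at hc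
    exact ⟨c, hc.1.1, hc.1.2, hc.2.1, hc.2.2⟩
  by_cases ha1 : a ∈ S₁
  · have ha2 : a ∉ S₂ := fun h => haI ⟨ha1, h⟩
    by_cases hb2 : b ∈ S₂
    · have hb1 : b ∉ S₁ := fun h => hbI ⟨h, hb2⟩
      obtain ⟨c, hc1, hc2, hca, hcb⟩ := pick
      rw [← fswap_decomp a b c (Ne.symm hcb) (fun h => hb1 (h ▸ ha1))]
      exact hmul _ _ (hmul _ _ (key S₂ hS2 c a hc2 ha2) (key S₁ hS1 b c hb1 hc1))
        (key S₂ hS2 c a hc2 ha2)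
    · exact key S₂ hS2 a b ha2 hb2
  · by_cases hb1 : b ∈ S₁
    · have hb2 : b ∉ S₂ := fun h => hbI ⟨hb1, h⟩
      obtain ⟨c, hc1, hc2, hca, hcb⟩ := pick
      rw [← fswap_decomp a b c (Ne.symm hcb) (fun h => ha1 (h ▸ hb1) : b ≠ a)]
      exact hmul _ _ (hmul _ _ (key S₁ hS1 c a hc1 ha1) (key S₂ hS2 b c hb2 hc2))
        (key S₁ hS1 c a hc1 ha1)
    · exact key S₁ hS1 a b ha1 hb1

lemma sInter_mem {α : Type*} {ℱ : Set (Set α)} (hne : ℱ.Nonempty)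
    (hfin : ∀ S ∈ ℱ, S.Finite)
    (hinter : ∀ S₁ ∈ ℱ, ∀ S₂ ∈ ℱ, S₁ ∩ S₂ ∈ ℱ) : ⋂₀ ℱ ∈ ℱ := by
  classical
  set N : Set ℕ := {n | ∃ S ∈ ℱ, S.ncard = n} with hN
  have hNne : N.Nonempty := ⟨(hne.choose).ncard, hne.choose, hne.choose_spec, rfl⟩
  obtain ⟨S₀, hS₀, hcard⟩ := Nat.sInf_mem hNne
  have hmin : ∀ S ∈ ℱ, S₀ ⊆ S := by
    intro S hS
    have hmem : S₀ ∩ S ∈ ℱ := hinter S₀ hS₀ S hS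
    have hle : sInf N ≤ (S₀ ∩ S).ncard := Nat.sInf_le ⟨S₀ ∩ S, hmem, rfl⟩
    rw [← hcard] at hle
    have heq : S₀ ∩ S = S₀ :=
      Set.eq_of_subset_of_ncard_le Set.inter_subset_left hle (hfin S₀ hS₀)
    intro x hx
    rw [← heq] at hx
    exact hx.2
  have : ⋂₀ ℱ = S₀ :=
    subset_antisymm (Set.sInter_subset_of_mem hS₀) (Set.subset_sInter hmin)
  rw [this]; exact hS₀

variable {X : Type*} [MulAction (finPerm A) X]

lemma supp_spec {x : X} (hx : FinitelySupported A x) :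
    (supp A x).Finite ∧ MulAction.Supports (finPerm A) (supp A x) x := by
  have hmem : ⋂₀ {S : Set A | S.Finite ∧ MulAction.Supports (finPerm A) S x}
      ∈ {S : Set A | S.Finite ∧ MulAction.Supports (finPerm A) S x} := by
    apply sInter_mem
    · obtain ⟨S, hSf, hSs⟩ := hx; exact ⟨S, hSf, hSs⟩
    · intro S hS; exact hS.1
    · rintro S₁ ⟨hf1, hs1⟩ S₂ ⟨hf2, hs2⟩
      refine ⟨hf1.subset Set.inter_subset_left, ?_⟩
      exact fix_inter (C := fun π => π • x = x) (one_smul _ x)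
        (fun π σ hπ hσ => by
          have hπ' : π • x = x := hπ
          have hσ' : σ • x = x := hσ
          show (π * σ) • x = x
          rw [mul_smul, hσ', hπ']) hf1 hf2 hs1 hs2
  exact hmem

lemma supports_smul {S : Set A} {x : X} (π : finPerm A)
    (h : MulAction.Supports (finPerm A) S x) :
    MulAction.Supports (finPerm A) (π • S) (π • x) := by
  intro σ hσ
  have hfix : ∀ a ∈ S, (π⁻¹ * σ * π) • a = a := by
    intro a ha
    have : σ • (π • a) = π • a := hσ (Set.smul_mem_smul_set ha)
    rw [mul_smul, mul_smul, this, inv_smul_smul]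
  have := h _ (fun a ha => hfix a ha)
  calc σ • π • x = π • (π⁻¹ * σ * π) • x := by
        rw [mul_smul, mul_smul, smul_inv_smul]
    _ = π • x := by rw [this]

lemma fs_smul {x : X} (hx : FinitelySupported A x) (π : finPerm A) :
    FinitelySupported A (π • x) := by
  obtain ⟨S, hSf, hSs⟩ := hx
  exact ⟨π • S, hSf.smul_set, supports_smul π hSs⟩

lemma supp_smul {x : X} (hx : FinitelySupported A x) (π : finPerm A) :
    supp A (π • x) = π • supp A x := by
  have step : ∀ (σ : finPerm A) (y : X), FinitelySupported A y →
      supp A (σ • y) ⊆ σ • supp A y := by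
    intro σ y hy
    apply Set.sInter_subset_of_mem
    exact ⟨(supp_spec hy).1.smul_set, supports_smul σ (supp_spec hy).2⟩
  apply subset_antisymm (step π x hx)
  have h2 := step π⁻¹ (π • x) (fs_smul hx π)
  rw [inv_smul_smul] at h2
  calc π • supp A x ⊆ π • (π⁻¹ • supp A (π • x)) := Set.smul_set_mono h2
    _ = supp A (π • x) := smul_inv_smul _ _

end Aux2

section Aux3
variable {A : Type*} [DecidableEq A] [Infinite A] {X : Type*} [MulAction (finPerm A) X]

lemma fnSupp_spec {D : Set X} {f : X → X}
    (hfs : ∃ S : Set A, S.Finite ∧ FnSupportsOn A D S f) :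
    (fnSupp A D f).Finite ∧ FnSupportsOn A D (fnSupp A D f) f := by
  have hmem : ⋂₀ {S : Set A | S.Finite ∧ FnSupportsOn A D S f}
      ∈ {S : Set A | S.Finite ∧ FnSupportsOn A D S f} := by
    apply sInter_mem
    · exact hfs
    · intro S hS; exact hS.1
    · rintro S₁ ⟨hf1, hs1⟩ S₂ ⟨hf2, hs2⟩
      refine ⟨hf1.subset Set.inter_subset_left, ?_⟩
      exact fix_inter (C := fun π => ∀ x ∈ D, π • x ∈ D ∧ f (π • x) = π • f x)
        (fun x hx => ⟨by rw [one_smul]; exact hx, by rw [one_smul, one_smul]⟩)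
        (fun π σ hπ hσ => by
          have hπ' : ∀ x ∈ D, π • x ∈ D ∧ f (π • x) = π • f x := hπ
          have hσ' : ∀ x ∈ D, σ • x ∈ D ∧ f (σ • x) = σ • f x := hσ
          intro x hx
          obtain ⟨h1, h2⟩ := hσ' x hx
          obtain ⟨h3, h4⟩ := hπ' _ h1
          refine ⟨by rw [mul_smul]; exact h3, ?_⟩
          rw [mul_smul, h4, h2, mul_smul])
        hf1 hf2 hs1 hs2
  exact hmem

lemma unif (hinv : ∀ y : X, FinitelySupported A y)
    {Z : Set X} (hZ : Z.Finite) {S : Set A} (hS : S.Finite)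
    (hsupp : ∀ π : finPerm A, (∀ a ∈ S, π • a = a) → π • Z = Z) :
    ∀ z ∈ Z, MulAction.Supports (finPerm A) S z := by
  have key : ∀ z ∈ Z, supp A z ⊆ S := by
    intro z hz a ha
    by_contra haS
    have hUfin : (⋃ w ∈ Z, supp A w).Finite :=
      hZ.biUnion (fun w _ => (supp_spec (hinv w)).1)
    obtain ⟨b, hb⟩ := (hUfin.union hS).infinite_compl.nonempty
    simp only [Set.mem_compl_iff, Set.mem_union, not_or] at hb
    have hπS : ∀ c ∈ S, (fswap a b) • c = c := by
      intro c hc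
      show Equiv.swap a b c = c
      exact Equiv.swap_apply_of_ne_of_ne (fun h => haS (h ▸ hc)) (fun h => hb.2 (h ▸ hc))
    have hZfix : (fswap a b) • Z = Z := hsupp _ hπS
    have hmem : (fswap a b) • z ∈ Z := by
      rw [← hZfix]; exact Set.smul_mem_smul_set hz
    have hbmem : b ∈ supp A ((fswap a b) • z) := by
      rw [supp_smul (hinv z)]
      have h2 : (fswap a b) • a ∈ (fswap a b) • supp A z := Set.smul_mem_smul_set ha
      rwa [show (fswap a b) • a = b from Equiv.swap_apply_left a b] at h2
    exact hb.1 (Set.mem_biUnion hmem hbmem)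
  intro z hz π hπ
  exact (supp_spec (hinv z)).2 π (fun c hc => hπ (key z hz hc))

end Aux3

/-- a finitely supported inclusion-order-preserving self-map of `℘_us(X)`,
for `X` not FSM uniformly infinite, has a least fixed point supported by
`supp(f) ∪ supp(X)`. -/
theorem stmt5 {A Y : Type*} [Infinite A] [MulAction (finPerm A) Y]
    (hinv : ∀ y : Y, FinitelySupported A y) (X : Set Y)
    (hX : FinitelySupported A X) (h : NoInfUS A X)
    (f : Set Y → Set Y)
    (hmap : ∀ Z ∈ usPowerset A X, f Z ∈ usPowerset A X)
    (hfs : ∃ S : Set A, S.Finite ∧ FnSupportsOn A (usPowerset A X) S f)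
    (hmono : ∀ Z ∈ usPowerset A X, ∀ W ∈ usPowerset A X, Z ⊆ W → f Z ⊆ f W) :
    ∃ L ∈ usPowerset A X, f L = L ∧
      (∀ Z ∈ usPowerset A X, f Z = Z → L ⊆ Z) ∧
      MulAction.Supports (finPerm A) (fnSupp A (usPowerset A X) f ∪ supp A X) L := by
  classical
  obtain ⟨hTf_fin, hTf⟩ := fnSupp_spec hfs
  obtain ⟨hXs_fin, _⟩ := supp_spec hX
  set T : Set A := fnSupp A (usPowerset A X) f ∪ supp A X with hT
  have hTfin : T.Finite := hTf_fin.union hXs_fin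
  set Z : ℕ → Set Y := fun n => f^[n] ∅ with hZdef
  have hZsucc : ∀ n, Z (n + 1) = f (Z n) := fun n => Function.iterate_succ_apply' f n ∅
  have hmem : ∀ n, Z n ∈ usPowerset A X := by
    intro n
    induction n with
    | zero =>
      exact ⟨Set.empty_subset X, ∅, Set.finite_empty,
        fun x hx => absurd hx (Set.notMem_empty x)⟩
    | succ n ih => rw [hZsucc]; exact hmap _ ih
  have hsuppn : ∀ n, ∀ π : finPerm A, (∀ a ∈ T, π • a = a) → π • Z n = Z n := by
    intro n
    induction n with
    | zero => intro π _; exact Set.smul_set_empty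
    | succ n ih =>
      intro π hπ
      have hfn : π • Z n = Z n := ih π hπ
      have := hTf π (fun a ha => hπ a (Set.mem_union_left _ ha)) (Z n) (hmem n)
      obtain ⟨_, heq⟩ := this
      rw [hfn] at heq
      rw [hZsucc]
      exact heq.symm
  have hZfin : ∀ n, (Z n).Finite := fun n => h _ (hmem n).1 (hmem n).2
  have hZsub : ∀ n, Z n ⊆ Z (n + 1) := by
    intro n
    induction n with
    | zero => exact Set.empty_subset _
    | succ n ih =>
      rw [hZsucc, hZsucc]
      exact hmono _ (hmem n) _ (hmem (n + 1)) ih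
  have hunif : ∀ n, ∀ z ∈ Z n, MulAction.Supports (finPerm A) T z :=
    fun n => unif hinv (hZfin n) hTfin (hsuppn n)
  have hWsub : (⋃ n, Z n) ⊆ X := Set.iUnion_subset fun n => (hmem n).1
  have hWus : UniformlySupported A (⋃ n, Z n) := by
    refine ⟨T, hTfin, fun x hx => ?_⟩
    obtain ⟨n, hn⟩ := Set.mem_iUnion.mp hx
    exact hunif n x hn
  have hWfin : (⋃ n, Z n).Finite := h _ hWsub hWus
  have hstab : ∃ n, Z (n + 1) = Z n := by
    by_contra hc
    push_neg at hc
    have hstrict : ∀ n, Z n ⊂ Z (n + 1) :=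
      fun n => (hZsub n).ssubset_of_ne (fun he => hc n he.symm)
    have hcard : ∀ n, n ≤ (Z n).ncard := by
      intro n
      induction n with
      | zero => exact Nat.zero_le _
      | succ n ih =>
        have := Set.ncard_lt_ncard (hstrict n) (hZfin (n + 1))
        omega
    have hbound : ∀ n, (Z n).ncard ≤ (⋃ n, Z n).ncard :=
      fun n => Set.ncard_le_ncard (Set.subset_iUnion Z n) hWfin
    have h1 := hcard ((⋃ n, Z n).ncard + 1)
    have h2 := hbound ((⋃ n, Z n).ncard + 1)
    omega
  obtain ⟨n, hfixn⟩ := hstab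
  refine ⟨Z n, hmem n, ?_, ?_, ?_⟩
  · rw [← hZsucc]; exact hfixn
  · intro Z' hZ' hfixZ'
    have : ∀ m, Z m ⊆ Z' := by
      intro m
      induction m with
      | zero => exact Set.empty_subset _
      | succ m ih =>
        rw [hZsucc]
        calc f (Z m) ⊆ f Z' := hmono _ (hmem m) _ hZ' ih
          _ = Z' := hfixZ'
    exact this n
  · intro π hπ
    exact hsuppn n π (fun a ha => hπ ha)
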